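/- Let k be a natural number and let M be a (2^k)×(2^k) complex matrix with trace M = 0. Then there exists a (2^k)×(2^k) unitary matrix U such that every diagonal entry of U * M * Uᴴ is zero. -/

import Mathlib

open Matrix Complex
open scoped Matrix ComplexConjugate

lemma unit2 (x y : ℂ) (h : x * conj x + y * conj y = 1) :
    !![x, y; -(conj y), conj x] ∈ Matrix.unitaryGroup (Fin 2) ℂ := by
  rw [Matrix.mem_unitaryGroup_iff]
  ext i j
  rw [Matrix.star_eq_conjTranspose]
  fin_cases i <;> fin_cases j <;>
    simp [Matrix.mul_apply, Fin.sum_univ_two, Matrix.one_apply] <;> ring_nf <;>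
    linear_combination h

lemma diag00 (T : Matrix (Fin 2) (Fin 2) ℂ) (x y : ℂ) :
    ((!![x, y; -(conj y), conj x]) * T * (!![x, y; -(conj y), conj x])ᴴ) 0 0 =
      T 0 0 * (x * conj x) + T 0 1 * (x * conj y) + T 1 0 * (y * conj x) +
        T 1 1 * (y * conj y) := by
  simp [Matrix.mul_apply, Fin.sum_univ_two, Matrix.vecMul, dotProduct, Fin.sum_univ_two]
  ring

lemma tri2 (T : Matrix (Fin 2) (Fin 2) ℂ) (h10 : T 1 0 = 0) (h11 : T 1 1 = -T 0 0) :
    ∃ W ∈ Matrix.unitaryGroup (Fin 2) ℂ, (W * T * Wᴴ) 0 0 = 0 := by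
  set lam := T 0 0 with hlam
  set beta := T 0 1 with hbeta
  -- reduce to finding a unit vector
  suffices h : ∃ x y : ℂ, x * conj x + y * conj y = 1 ∧
      lam * (x * conj x) + beta * (x * conj y) - lam * (y * conj y) = 0 by
    obtain ⟨x, y, hu, hv⟩ := h
    refine ⟨_, unit2 x y hu, ?_⟩
    rw [diag00, h10, h11]
    linear_combination hv
  by_cases hl : lam = 0
  · exact ⟨1, 0, by simp, by simp [hl]⟩
  by_cases hb : beta = 0
  · refine ⟨(Real.sqrt 2⁻¹ : ℝ), (Real.sqrt 2⁻¹ : ℝ), ?_, ?_⟩ <;>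
    · have h2 : ((Real.sqrt 2⁻¹ : ℝ) : ℂ) * conj ((Real.sqrt 2⁻¹ : ℝ) : ℂ) = (2⁻¹ : ℂ) := by
        rw [Complex.conj_ofReal, ← Complex.ofReal_mul,
          Real.mul_self_sqrt (by norm_num)]
        norm_num
      rw [h2]
      first
      | (rw [hb]; ring)
      | norm_num
  · -- main case
    set r : ℝ := ‖lam‖ / ‖beta‖ with hr
    have hbpos : 0 < ‖beta‖ := by simpa using hb
    have hlpos : 0 < ‖lam‖ := by simpa using hl
    have hrpos : 0 < r := div_pos hlpos hbpos
    set D : ℝ := Real.sqrt (1 + 4 * r ^ 2) with hD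
    have hD2 : D ^ 2 = 1 + 4 * r ^ 2 := Real.sq_sqrt (by positivity)
    have hD1 : 1 ≤ D := by
      nlinarith [Real.sqrt_nonneg (1 + 4 * r ^ 2)]
    set m : ℝ := (D - 1) / (2 * r) with hm
    have hm0 : 0 ≤ m := by
      apply div_nonneg <;> nlinarith
    have hroot : r * (1 - m ^ 2) = m := by
      have hm2 : m * (2 * r) = D - 1 := by rw [hm]; field_simp
      have hD' : D = 1 + 2 * r * m := by linarith
      rw [hD'] at hD2
      have h4 : (4 * r) * (r * (1 - m ^ 2) - m) = 0 := by linear_combination -hD2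
      rcases mul_eq_zero.mp h4 with h | h
      · linarith
      · linarith
    have hm1 : m ^ 2 ≤ 1 := by nlinarith
    obtain ⟨mu, hmu⟩ : ∃ mu : ℂ, mu = lam * ((m : ℂ) ^ 2 - 1) / beta := ⟨_, rfl⟩
    have habs : ‖mu‖ = m := by
      rw [hmu, norm_div, norm_mul]
      have : ((m : ℂ) ^ 2 - 1) = (((m ^ 2 - 1 : ℝ)) : ℂ) := by push_cast; ring
      rw [this, Complex.norm_real, Real.norm_eq_abs, abs_of_nonpos (by linarith), hr] at *
      field_simp
      have h' := hroot
      rw [div_mul_eq_mul_div, div_eq_iff hbpos.ne'] at h'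
      linarith
    have hmu2 : mu * conj mu = (m : ℂ) ^ 2 := by
      rw [Complex.mul_conj, Complex.normSq_eq_norm_sq, habs]
      push_cast
      ring
    have hbm : beta * mu = lam * ((m : ℂ) ^ 2 - 1) := by
      rw [hmu]; field_simp
    have hs : (0:ℝ) < 1 + m ^ 2 := by positivity
    set X : ℝ := (Real.sqrt (1 + m ^ 2))⁻¹ with hXdef
    have hX : (X : ℂ) * (X : ℂ) * (1 + (m : ℂ) ^ 2) = 1 := by
      have h1 : Real.sqrt (1 + m ^ 2) * Real.sqrt (1 + m ^ 2) = 1 + m ^ 2 :=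
        Real.mul_self_sqrt hs.le
      have h0 : Real.sqrt (1 + m ^ 2) ≠ 0 := by
        intro h; rw [h] at h1; nlinarith
      have : X * X * (1 + m ^ 2) = 1 := by
        rw [hXdef, ← h1]; field_simp
        rw [Real.sqrt_sq (Real.sqrt_nonneg _)]
      exact_mod_cast this
    refine ⟨(X : ℂ), conj mu * (X : ℂ), ?_, ?_⟩
    · simp only [_root_.map_mul, Complex.conj_conj, Complex.conj_ofReal]
      linear_combination ((X:ℂ) * (X:ℂ)) * hmu2 + hX
    · simp only [_root_.map_mul, Complex.conj_conj, Complex.conj_ofReal]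
      linear_combination ((X:ℂ) * (X:ℂ)) * hbm - lam * ((X:ℂ) * (X:ℂ)) * hmu2

lemma entry10 (T : Matrix (Fin 2) (Fin 2) ℂ) (u v : ℂ) :
    ((!![u, v; -(conj v), conj u]) * T * (!![u, v; -(conj v), conj u])ᴴ) 1 0 =
      (-(conj v) * T 0 0 + conj u * T 1 0) * conj u +
        (-(conj v) * T 0 1 + conj u * T 1 1) * conj v := by
  simp [Matrix.mul_apply, Fin.sum_univ_two, Matrix.vecMul, dotProduct]

lemma core2 (N : Matrix (Fin 2) (Fin 2) ℂ) (h : N.trace = 0) :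
    ∃ W ∈ Matrix.unitaryGroup (Fin 2) ℂ, (W * N * Wᴴ) 0 0 = 0 := by
  have htr2 := Matrix.trace_fin_two N
  rw [h] at htr2
  have h11 : N 1 1 = -N 0 0 := by linear_combination -htr2
  obtain ⟨μ, x, y, hn, he1, he2⟩ :
      ∃ (μ x y : ℂ), x * conj x + y * conj y = 1 ∧
        N 0 0 * x + N 0 1 * y = μ * x ∧ N 1 0 * x + N 1 1 * y = μ * y := by
    by_cases hb : N 0 1 = 0
    · exact ⟨N 1 1, 0, 1, by simp, by simp [hb], by simp⟩
    · obtain ⟨lam, hlam⟩ : ∃ z : ℂ, z ^ 2 = N 0 0 ^ 2 + N 0 1 * N 1 0 :=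
        IsAlgClosed.exists_pow_nat_eq _ (by norm_num : (0:ℕ) < 2)
      have hs0 : 0 < Complex.normSq (N 0 1) + Complex.normSq (lam - N 0 0) := by
        have := Complex.normSq_pos.mpr hb
        have := Complex.normSq_nonneg (lam - N 0 0)
        linarith
      set s : ℝ := Complex.normSq (N 0 1) + Complex.normSq (lam - N 0 0) with hs
      set q : ℝ := Real.sqrt s with hqdef
      have hq : (q : ℂ) * (q : ℂ) = (s : ℂ) := by
        exact_mod_cast Real.mul_self_sqrt hs0.le
      have hq0 : (q : ℂ) ≠ 0 :=
        Complex.ofReal_ne_zero.mpr (Real.sqrt_pos.mpr hs0).ne'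
      have e1 : N 0 1 * conj (N 0 1) = (Complex.normSq (N 0 1) : ℂ) := Complex.mul_conj _
      have e2 : (lam - N 0 0) * conj (lam - N 0 0) =
          (Complex.normSq (lam - N 0 0) : ℂ) := Complex.mul_conj _
      have hcast : ((s : ℝ) : ℂ) =
          (Complex.normSq (N 0 1) : ℂ) + (Complex.normSq (lam - N 0 0) : ℂ) := by
        rw [hs]; push_cast; ring
      refine ⟨lam, N 0 1 / q, (lam - N 0 0) / q, ?_, ?_, ?_⟩
      · simp only [map_div₀, Complex.conj_ofReal]
        rw [div_mul_div_comm, div_mul_div_comm, ← add_div, e1, e2, hq, ← hcast]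
        exact div_self (Complex.ofReal_ne_zero.mpr hs0.ne')
      · field_simp
        ring
      · have key : N 1 0 * N 0 1 + N 1 1 * (lam - N 0 0) = lam * (lam - N 0 0) := by
          rw [h11]; linear_combination -hlam
        field_simp
        linear_combination key
  have hn' : conj x * conj (conj x) + conj y * conj (conj y) = 1 := by
    simp only [Complex.conj_conj]
    linear_combination hn
  have hV : !![conj x, conj y; -(conj (conj y)), conj (conj x)] ∈
      Matrix.unitaryGroup (Fin 2) ℂ := unit2 (conj x) (conj y) hn'
  set V : Matrix (Fin 2) (Fin 2) ℂ :=
    !![conj x, conj y; -(conj (conj y)), conj (conj x)] with hVdef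
  set T : Matrix (Fin 2) (Fin 2) ℂ := V * N * Vᴴ with hT
  have hT10 : T 1 0 = 0 := by
    rw [hT, hVdef, entry10]
    simp only [Complex.conj_conj]
    linear_combination x * he2 - y * he1
  have htrT : T 0 0 + T 1 1 = 0 := by
    have hVV : Vᴴ * V = 1 := by
      rw [← Matrix.star_eq_conjTranspose]
      exact (Matrix.mem_unitaryGroup_iff').mp hV
    have : T.trace = N.trace := by
      rw [hT, Matrix.trace_mul_cycle, hVV, Matrix.one_mul]
    have h2 := Matrix.trace_fin_two T
    rw [this, h] at h2
    linear_combination -h2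
  obtain ⟨W, hW, hW0⟩ := tri2 T hT10 (by linear_combination htrT)
  refine ⟨W * V, mul_mem hW hV, ?_⟩
  have : W * V * N * (W * V)ᴴ = W * T * Wᴴ := by
    rw [Matrix.conjTranspose_mul, hT]
    noncomm_ring
  rw [this, hW0]

lemma two_lemma (N : Matrix (Fin 2) (Fin 2) ℂ) :
    ∃ W ∈ Matrix.unitaryGroup (Fin 2) ℂ, ∀ a, (W * N * Wᴴ) a a = N.trace / 2 := by
  have h : (N - (N.trace / 2) • 1).trace = 0 := by
    rw [Matrix.trace_sub, Matrix.trace_smul, Matrix.trace_one]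
    have : (Fintype.card (Fin 2) : ℂ) = 2 := by simp
    rw [this, smul_eq_mul]
    ring
  obtain ⟨W, hW, h0⟩ := core2 _ h
  refine ⟨W, hW, ?_⟩
  have hWU : W * Wᴴ = 1 := by
    rw [← Matrix.star_eq_conjTranspose]
    exact (Matrix.mem_unitaryGroup_iff).mp hW
  have hexp : W * N * Wᴴ = W * (N - (N.trace / 2) • 1) * Wᴴ + (N.trace / 2) • 1 := by
    rw [Matrix.mul_sub, Matrix.sub_mul, Matrix.mul_smul, Matrix.smul_mul,
      Matrix.mul_one, hWU]
    abel
  have h00 : (W * N * Wᴴ) 0 0 = N.trace / 2 := by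
    rw [hexp, Matrix.add_apply, h0, Matrix.smul_apply, Matrix.one_apply_eq]
    simp
  have htrW : (W * N * Wᴴ).trace = N.trace := by
    have hVV : Wᴴ * W = 1 := by
      rw [← Matrix.star_eq_conjTranspose]
      exact (Matrix.mem_unitaryGroup_iff').mp hW
    rw [Matrix.trace_mul_cycle, hVV, Matrix.one_mul]
  have h11 : (W * N * Wᴴ) 1 1 = N.trace / 2 := by
    have h2 := Matrix.trace_fin_two (W * N * Wᴴ)
    rw [htrW] at h2
    linear_combination -h2 - h00
  intro a
  fin_cases a
  · exact h00
  · exact h11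

lemma trace_conj_unitary {n : Type*} [Fintype n] [DecidableEq n]
    {V : Matrix n n ℂ} (hV : V ∈ Matrix.unitaryGroup n ℂ) (M : Matrix n n ℂ) :
    (V * M * Vᴴ).trace = M.trace := by
  have hVV : Vᴴ * V = 1 := by
    rw [← Matrix.star_eq_conjTranspose]; exact Matrix.mem_unitaryGroup_iff'.mp hV
  rw [Matrix.trace_mul_cycle, hVV, Matrix.one_mul]

lemma trace_submatrix_equiv' {n m : Type*} [Fintype n] [Fintype m] (e : m ≃ n)
    (M : Matrix n n ℂ) : (M.submatrix e e).trace = M.trace := by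
  simp only [Matrix.trace, Matrix.diag_apply, Matrix.submatrix_apply]
  exact Equiv.sum_comp e fun j => M j j

lemma submatrix_unitary {n m : Type*} [Fintype n] [DecidableEq n] [Fintype m] [DecidableEq m]
    {U : Matrix m m ℂ} (hU : U ∈ Matrix.unitaryGroup m ℂ) (e : n ≃ m) :
    U.submatrix e e ∈ Matrix.unitaryGroup n ℂ := by
  rw [Matrix.mem_unitaryGroup_iff, Matrix.star_eq_conjTranspose] at hU ⊢
  rw [Matrix.conjTranspose_submatrix, Matrix.submatrix_mul_equiv, hU,
    Matrix.submatrix_one_equiv]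

lemma good_of_conj {n : Type*} [Fintype n] [DecidableEq n]
    {V : Matrix n n ℂ} (hV : V ∈ Matrix.unitaryGroup n ℂ) (M : Matrix n n ℂ) (c : ℂ)
    (h : ∃ U ∈ Matrix.unitaryGroup n ℂ, ∀ i, (U * (V * M * Vᴴ) * Uᴴ) i i = c) :
    ∃ U ∈ Matrix.unitaryGroup n ℂ, ∀ i, (U * M * Uᴴ) i i = c := by
  obtain ⟨U, hU, hd⟩ := h
  refine ⟨U * V, mul_mem hU hV, fun i => ?_⟩
  have : U * V * M * (U * V)ᴴ = U * (V * M * Vᴴ) * Uᴴ := by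
    rw [Matrix.conjTranspose_mul]; noncomm_ring
  rw [this]; exact hd i

lemma good_of_equiv {n m : Type*} [Fintype n] [DecidableEq n] [Fintype m] [DecidableEq m]
    (e : n ≃ m) (M : Matrix n n ℂ) (c : ℂ)
    (h : ∃ U ∈ Matrix.unitaryGroup m ℂ,
      ∀ i, (U * M.submatrix e.symm e.symm * Uᴴ) i i = c) :
    ∃ U ∈ Matrix.unitaryGroup n ℂ, ∀ i, (U * M * Uᴴ) i i = c := by
  obtain ⟨U, hU, hd⟩ := h
  refine ⟨U.submatrix e e, submatrix_unitary hU e, fun i => ?_⟩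
  have hM : M = (M.submatrix e.symm e.symm).submatrix e e := by
    ext i j; simp
  have hprod : U.submatrix e e * M * (U.submatrix e e)ᴴ
      = (U * M.submatrix e.symm e.symm * Uᴴ).submatrix e e := by
    conv_lhs => rw [hM]
    rw [Matrix.conjTranspose_submatrix, Matrix.submatrix_mul_equiv,
      Matrix.submatrix_mul_equiv]
  rw [hprod]
  exact hd (e i)

lemma blockDiagonal_unitary {m o : Type*} [Fintype m] [DecidableEq m] [Fintype o] [DecidableEq o]
    {W : o → Matrix m m ℂ} (hW : ∀ k, W k ∈ Matrix.unitaryGroup m ℂ) :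
    Matrix.blockDiagonal W ∈ Matrix.unitaryGroup (m × o) ℂ := by
  rw [Matrix.mem_unitaryGroup_iff, Matrix.star_eq_conjTranspose,
    Matrix.blockDiagonal_conjTranspose, ← Matrix.blockDiagonal_mul,
    ← Matrix.blockDiagonal_one]
  have hblk : (fun k => W k * (W k)ᴴ) = (1 : o → Matrix m m ℂ) := by
    funext k
    have := (Matrix.mem_unitaryGroup_iff).mp (hW k)
    rwa [Matrix.star_eq_conjTranspose] at this
  rw [hblk]

lemma bd_diag {m o : Type*} [Fintype m] [DecidableEq m] [Fintype o] [DecidableEq o]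
    (W : o → Matrix m m ℂ) (M : Matrix (m × o) (m × o) ℂ) (a : m) (i : o) :
    (Matrix.blockDiagonal W * M * (Matrix.blockDiagonal W)ᴴ) (a, i) (a, i) =
      (W i * Matrix.of (fun b c => M (b, i) (c, i)) * (W i)ᴴ) a a := by
  rw [Matrix.blockDiagonal_conjTranspose]
  simp only [Matrix.mul_apply, Matrix.blockDiagonal_apply, Fintype.sum_prod_type,
    Matrix.conjTranspose_apply, Matrix.of_apply, ite_mul, mul_ite, zero_mul, mul_zero,
    Finset.sum_ite_eq, Finset.sum_ite_eq', Finset.mem_univ, if_true]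

lemma key : ∀ (k : ℕ) (n : Type) [Fintype n] [DecidableEq n], Fintype.card n = 2 ^ k →
    ∀ M : Matrix n n ℂ, ∃ U ∈ Matrix.unitaryGroup n ℂ,
      ∀ i, (U * M * Uᴴ) i i = M.trace / 2 ^ k := by
  intro k
  induction k with
  | zero =>
    intro n _ _ hcard M
    refine ⟨1, one_mem _, fun i => ?_⟩
    simp only [Matrix.conjTranspose_one, Matrix.one_mul, Matrix.mul_one, pow_zero, div_one]
    obtain ⟨a, ha⟩ := Fintype.card_eq_one_iff.mp (by simpa using hcard)
    have huniv : (Finset.univ : Finset n) = {i} := by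
      apply Finset.eq_singleton_iff_unique_mem.mpr
      exact ⟨Finset.mem_univ i, fun b _ => (ha b).trans (ha i).symm⟩
    have : M.trace = M i i := by
      simp [Matrix.trace, Matrix.diag, huniv]
    rw [this]
  | succ k ih =>
    intro n _ _ hcard M
    have hc2 : Fintype.card n = Fintype.card (Fin 2 × Fin (2 ^ k)) := by
      simp [hcard, pow_succ, mul_comm]
    have e := Fintype.equivOfCardEq hc2
    apply good_of_equiv e
    set M₁ := M.submatrix e.symm e.symm with hM₁
    have htr1 : M₁.trace = M.trace := trace_submatrix_equiv' e.symm M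
    choose W hWmem hWdiag using fun i : Fin (2 ^ k) =>
      two_lemma (Matrix.of fun a b : Fin 2 => M₁ (a, i) (b, i))
    have hVmem := blockDiagonal_unitary hWmem
    apply good_of_conj hVmem
    set M₂ := Matrix.blockDiagonal W * M₁ * (Matrix.blockDiagonal W)ᴴ with hM₂
    have htr2 : M₂.trace = M.trace := by rw [hM₂, trace_conj_unitary hVmem, htr1]
    have hdiag2 : ∀ a b i, M₂ (a, i) (a, i) = M₂ (b, i) (b, i) := by
      intro a b i
      rw [hM₂, bd_diag, bd_diag, hWdiag i a, hWdiag i b]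
    apply good_of_equiv (Equiv.prodComm (Fin 2) (Fin (2 ^ k)))
    set pc := (Equiv.prodComm (Fin 2) (Fin (2 ^ k))).symm with hpc
    set M₃ := M₂.submatrix pc pc with hM₃
    set S : Fin 2 → Matrix (Fin (2 ^ k)) (Fin (2 ^ k)) ℂ :=
      fun a => Matrix.of fun i j => M₃ (i, a) (j, a) with hS
    have hMpc : ∀ a i, M₃ (i, a) (i, a) = M₂ (a, i) (a, i) := by
      intro a i
      rw [hM₃]
      simp [hpc]
    have hStr : ∀ a, (S a).trace = M.trace / 2 := by
      intro a
      have hsa : (S a).trace = ∑ i, M₂ (a, i) (a, i) := by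
        simp only [hS, Matrix.trace, Matrix.diag_apply, Matrix.of_apply]
        exact Finset.sum_congr rfl fun i _ => hMpc a i
      have h2 : M.trace = ∑ b : Fin 2, ∑ i, M₂ (b, i) (b, i) := by
        rw [← htr2]
        have : M₂.trace = ∑ p : Fin 2 × Fin (2 ^ k), M₂ p p := by
          simp [Matrix.trace, Matrix.diag]
        rw [this, Fintype.sum_prod_type]
      rw [Fin.sum_univ_two] at h2
      have h01 : ∑ i, M₂ ((0 : Fin 2), i) (0, i) = ∑ i, M₂ ((1 : Fin 2), i) (1, i) :=
        Finset.sum_congr rfl fun i _ => hdiag2 0 1 i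
      have ha1 : ∑ i, M₂ (a, i) (a, i) = ∑ i, M₂ ((1 : Fin 2), i) (1, i) :=
        Finset.sum_congr rfl fun i _ => hdiag2 a 1 i
      rw [hsa, ha1, h2, h01]
      ring
    choose U hUmem hUdiag using fun a : Fin 2 => ih (Fin (2 ^ k)) (Fintype.card_fin _) (S a)
    refine ⟨Matrix.blockDiagonal U, blockDiagonal_unitary hUmem, ?_⟩
    rintro ⟨i, a⟩
    rw [bd_diag]
    have hof : (Matrix.of fun b c => M₃ (b, a) (c, a)) = S a := rfl
    rw [hof, hUdiag a i, hStr a, div_div, ← pow_succ']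

/-- The `2^k`-dimensional zerodiagonalization result: every traceless `2^k × 2^k` complex
matrix can be conjugated by a unitary so that every diagonal entry vanishes. -/
theorem exists_unitary_zerodiagonalize_pow_two (k : ℕ)
    (M : Matrix (Fin (2 ^ k)) (Fin (2 ^ k)) ℂ) (hM : M.trace = 0) :
    ∃ U ∈ Matrix.unitaryGroup (Fin (2 ^ k)) ℂ,
      ∀ i : Fin (2 ^ k), (U * M * Uᴴ) i i = 0 := by
  obtain ⟨U, hU, hd⟩ := key k (Fin (2 ^ k)) (Fintype.card_fin _) M
  exact ⟨U, hU, fun i => by rw [hd i, hM, zero_div]⟩
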